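/- Suppose D⁺, D⁻ : ℝ³ → ℝ³ are C¹ with bounded derivatives on the two sides of the graph of Φ, ρ_c is bounded, and for all small r, Δl the divergence identity ∫_{∂C} D · n dA = ∫_C ρ_c dx holds for the curved cylinder C of radius r and half-height Δl. Then (D⁺(0) − D⁻(0)) · n = ω, where n = (0,1,0) and ω = lim_{r→0} lim_{Δl→0} (1/(πr²)) ∫_C ρ_c dx, provided this limit exists. -/

import Mathlib

open Set Real Filter Topology intervalIntegral

noncomputable section

def dotP (a b : ℝ × ℝ × ℝ) : ℝ := a.1 * b.1 + a.2.1 * b.2.1 + a.2.2 * b.2.2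

def p1 (Φ : ℝ × ℝ → ℝ) (q : ℝ × ℝ) : ℝ := fderiv ℝ Φ q (1, 0)
def p2 (Φ : ℝ × ℝ → ℝ) (q : ℝ × ℝ) : ℝ := fderiv ℝ Φ q (0, 1)

/-- The piecewise electric induction: `Dplus` above the graph (θ,Φ(θ,η),η),
`Dminus` below. -/
def Dfield (Φ : ℝ × ℝ → ℝ) (Dplus Dminus : ℝ × ℝ × ℝ → ℝ × ℝ × ℝ)
    (p : ℝ × ℝ × ℝ) : ℝ × ℝ × ℝ :=
  if Φ (p.1, p.2.2) ≤ p.2.1 then Dplus p else Dminus p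

/-- The total outward flux ∫_{∂C} D·n dA through the boundary of the curved
cylinder C of radius r and half-height l (top + bottom + lateral surface). -/
def totalFlux (Φ : ℝ × ℝ → ℝ) (Dplus Dminus : ℝ × ℝ × ℝ → ℝ × ℝ × ℝ)
    (r l : ℝ) : ℝ :=
  (∫ α in (0:ℝ)..(2 * π), ∫ s in (0:ℝ)..r,
    s * dotP (Dfield Φ Dplus Dminus
        (s * cos α, Φ (s * cos α, s * sin α) + l, s * sin α))
      (-p1 Φ (s * cos α, s * sin α), 1, -p2 Φ (s * cos α, s * sin α))) +
  (∫ α in (0:ℝ)..(2 * π), ∫ s in (0:ℝ)..r,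
    s * dotP (Dfield Φ Dplus Dminus
        (s * cos α, Φ (s * cos α, s * sin α) - l, s * sin α))
      (p1 Φ (s * cos α, s * sin α), -1, p2 Φ (s * cos α, s * sin α))) +
  (∫ h in (-l)..l, ∫ α in (0:ℝ)..(2 * π),
    r * dotP (Dfield Φ Dplus Dminus
        (r * cos α, Φ (r * cos α, r * sin α) + h, r * sin α))
      (cos α, 0, sin α))

section aux
variable (M r₀ N : ℝ) (Φ : ℝ × ℝ → ℝ)

lemma lip_of_fderiv {E F : Type*} [NormedAddCommGroup E] [NormedSpace ℝ E]
    [NormedAddCommGroup F] [NormedSpace ℝ F] {f : E → F} {M : ℝ}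
    (hf : Differentiable ℝ f) (hb : ∀ x, ‖fderiv ℝ f x‖ ≤ M) (x y : E) :
    ‖f y - f x‖ ≤ M * ‖y - x‖ :=
  Convex.norm_image_sub_le_of_norm_fderiv_le (fun z _ => hf z)
    (fun z _ => hb z) convex_univ (mem_univ x) (mem_univ y)

lemma fderiv_zero_of_p (hΦ1 : p1 Φ (0,0) = 0) (hΦ2 : p2 Φ (0,0) = 0) :
    fderiv ℝ Φ (0,0) = 0 := by
  refine ContinuousLinearMap.ext fun v => ?_
  have hv : (v : ℝ × ℝ) = v.1 • ((1:ℝ),(0:ℝ)) + v.2 • ((0:ℝ),(1:ℝ)) := by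
    ext <;> simp
  rw [ContinuousLinearMap.zero_apply]
  conv_lhs => rw [hv]
  rw [map_add, map_smul, map_smul]
  simp only [p1, p2] at hΦ1 hΦ2
  rw [hΦ1, hΦ2]
  simp

lemma grad_bound (hM : 0 < M) (hΦ : ContDiff ℝ 2 Φ)
    (hΦ1 : p1 Φ (0,0) = 0) (hΦ2 : p2 Φ (0,0) = 0)
    (hΦb : ∀ q, ‖fderiv ℝ Φ q‖ ≤ M ∧ ‖fderiv ℝ (fderiv ℝ Φ) q‖ ≤ M) (q : ℝ × ℝ) :
    ‖fderiv ℝ Φ q‖ ≤ M * ‖q‖ := by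
  have hdf : Differentiable ℝ (fderiv ℝ Φ) :=
    (hΦ.fderiv_right (m := 1) (by norm_num)).differentiable one_ne_zero
  have := lip_of_fderiv hdf (fun x => (hΦb x).2) (0,0) q
  rw [fderiv_zero_of_p Φ hΦ1 hΦ2] at this
  simpa [Prod.mk_zero_zero] using this
end aux

section aux2
variable (M r₀ N : ℝ) (Φ : ℝ × ℝ → ℝ)

lemma p_bound (hM : 0 < M) (hΦ : ContDiff ℝ 2 Φ)
    (hΦ1 : p1 Φ (0,0) = 0) (hΦ2 : p2 Φ (0,0) = 0)
    (hΦb : ∀ q, ‖fderiv ℝ Φ q‖ ≤ M ∧ ‖fderiv ℝ (fderiv ℝ Φ) q‖ ≤ M) (q : ℝ × ℝ) :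
    |p1 Φ q| ≤ M * ‖q‖ ∧ |p2 Φ q| ≤ M * ‖q‖ := by
  have hg := grad_bound M Φ hM hΦ hΦ1 hΦ2 hΦb q
  constructor
  · have := (fderiv ℝ Φ q).le_opNorm (1,0)
    have h1 : ‖((1:ℝ),(0:ℝ))‖ = 1 := by simp [Prod.norm_def]
    rw [h1, mul_one] at this
    calc |p1 Φ q| ≤ ‖fderiv ℝ Φ q‖ := this
      _ ≤ M * ‖q‖ := hg
  · have := (fderiv ℝ Φ q).le_opNorm (0,1)
    have h1 : ‖((0:ℝ),(1:ℝ))‖ = 1 := by simp [Prod.norm_def]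
    rw [h1, mul_one] at this
    calc |p2 Φ q| ≤ ‖fderiv ℝ Φ q‖ := this
      _ ≤ M * ‖q‖ := hg

lemma Phi_bound (hM : 0 < M) (hΦ : ContDiff ℝ 2 Φ) (hΦ0 : Φ (0,0) = 0)
    (hΦb' : ∀ q, ‖fderiv ℝ Φ q‖ ≤ M) (q : ℝ × ℝ) :
    |Φ q| ≤ M * ‖q‖ := by
  have := lip_of_fderiv (hΦ.differentiable (by norm_num)) hΦb' (0,0) q
  rw [hΦ0] at this
  simpa [Prod.mk_zero_zero] using this

lemma arith_est (M r₀ N s l : ℝ) (hM : 0 < M) (hN : 0 ≤ N)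
    (hs : 0 ≤ s) (hl : 0 ≤ l) (hsr : s ≤ r₀) :
    M*((1+M)*s+l) * (M*s) + M*((1+M)*s+l) + M*((1+M)*s+l) * (M*s) + N*(M*s) + N*(M*s)
      ≤ (M*(1+M)*(1+2*M*r₀) + 2*M*N) * (s+l) := by
  have e1 : (1+M)*s + l ≤ (1+M)*(s+l) := by nlinarith
  have e2 : 1+2*M*s ≤ 1+2*M*r₀ := by nlinarith
  have h1 : M*(((1+M)*s+l)*(1+2*M*s)) ≤ M*(((1+M)*(s+l))*(1+2*M*r₀)) := by
    apply mul_le_mul_of_nonneg_left _ hM.le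
    apply mul_le_mul e1 e2 (by nlinarith) (by nlinarith)
  have h2 : 2*N*(M*s) ≤ 2*M*N*(s+l) := by nlinarith
  calc M*((1+M)*s+l) * (M*s) + M*((1+M)*s+l) + M*((1+M)*s+l) * (M*s) + N*(M*s) + N*(M*s)
      = M*(((1+M)*s+l)*(1+2*M*s)) + 2*N*(M*s) := by ring
    _ ≤ M*(((1+M)*(s+l))*(1+2*M*r₀)) + 2*M*N*(s+l) := add_le_add h1 h2
    _ = (M*(1+M)*(1+2*M*r₀) + 2*M*N) * (s + l) := by ring

/-- key pointwise estimate on the top/bottom integrand -/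
lemma key_est (hM : 0 < M) (hN : 0 ≤ N)
    (hΦ : ContDiff ℝ 2 Φ) (hΦ0 : Φ (0,0) = 0)
    (hΦ1 : p1 Φ (0,0) = 0) (hΦ2 : p2 Φ (0,0) = 0)
    (hΦb : ∀ q, ‖fderiv ℝ Φ q‖ ≤ M ∧ ‖fderiv ℝ (fderiv ℝ Φ) q‖ ≤ M)
    (D : ℝ × ℝ × ℝ → ℝ × ℝ × ℝ) (hD : ContDiff ℝ 1 D)
    (hDb : ∀ p, ‖fderiv ℝ D p‖ ≤ M) (hND : ‖D (0,0,0)‖ ≤ N)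
    (s l ε α : ℝ) (hs : 0 ≤ s) (hsr : s ≤ r₀) (hε : |ε| ≤ l) :
    |dotP (D (s*cos α, Φ (s*cos α, s*sin α) + ε, s*sin α))
        (-p1 Φ (s*cos α, s*sin α), 1, -p2 Φ (s*cos α, s*sin α)) - (D (0,0,0)).2.1|
      ≤ (M*(1+M)*(1+2*M*r₀) + 2*M*N) * (s + l) := by
  have hl : 0 ≤ l := (abs_nonneg ε).trans hε
  set q : ℝ × ℝ := (s*cos α, s*sin α) with hqdef
  set pt : ℝ × ℝ × ℝ := (s*cos α, Φ q + ε, s*sin α) with hptdef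
  have hq : ‖q‖ ≤ s := by
    rw [Prod.norm_def]
    apply max_le <;> rw [Real.norm_eq_abs, abs_mul]
    · calc |s| * |cos α| ≤ s * 1 := by
            apply mul_le_mul (le_of_eq (abs_of_nonneg hs)) (abs_cos_le_one α) (abs_nonneg _) hs
        _ = s := mul_one s
    · calc |s| * |sin α| ≤ s * 1 := by
            apply mul_le_mul (le_of_eq (abs_of_nonneg hs)) (abs_sin_le_one α) (abs_nonneg _) hs
        _ = s := mul_one s
  have hΦq : |Φ q| ≤ M * s := by
    calc |Φ q| ≤ M * ‖q‖ := Phi_bound M Φ hM hΦ hΦ0 (fun q => (hΦb q).1) q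
      _ ≤ M * s := by nlinarith
  have hp1 : |p1 Φ q| ≤ M * s := by
    have := (p_bound M Φ hM hΦ hΦ1 hΦ2 hΦb q).1; nlinarith
  have hp2 : |p2 Φ q| ≤ M * s := by
    have := (p_bound M Φ hM hΦ hΦ1 hΦ2 hΦb q).2; nlinarith
  have hpt : ‖pt‖ ≤ (1+M)*s + l := by
    rw [Prod.norm_def, Prod.norm_def]
    have h1 : ‖pt.1‖ ≤ s := by
      rw [Real.norm_eq_abs]; show |s*cos α| ≤ s
      rw [abs_mul, abs_of_nonneg hs]
      nlinarith [abs_cos_le_one α, abs_nonneg (cos α)]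
    have h3 : ‖pt.2.2‖ ≤ s := by
      rw [Real.norm_eq_abs]; show |s*sin α| ≤ s
      rw [abs_mul, abs_of_nonneg hs]
      nlinarith [abs_sin_le_one α, abs_nonneg (sin α)]
    have h2 : ‖pt.2.1‖ ≤ M*s + l := by
      rw [Real.norm_eq_abs]; show |Φ q + ε| ≤ M*s + l
      calc |Φ q + ε| ≤ |Φ q| + |ε| := abs_add_le _ _
        _ ≤ M*s + l := add_le_add hΦq hε
    apply max_le (by nlinarith) (max_le (by nlinarith) (by nlinarith))
  set Δ : ℝ × ℝ × ℝ := D pt - D (0,0,0) with hΔdef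
  have hΔ : ‖Δ‖ ≤ M * ((1+M)*s + l) := by
    have := lip_of_fderiv (hD.differentiable one_ne_zero) hDb (0,0,0) pt
    have h0 : ((0,0,0) : ℝ × ℝ × ℝ) = 0 := rfl
    rw [h0, sub_zero] at this
    calc ‖Δ‖ ≤ M * ‖pt‖ := this
      _ ≤ M * ((1+M)*s + l) := by nlinarith [norm_nonneg pt]
  have hΔ1 : |Δ.1| ≤ M * ((1+M)*s + l) := le_trans (norm_fst_le Δ) hΔ
  have hΔ2 : |Δ.2.1| ≤ M * ((1+M)*s + l) := le_trans (le_trans (norm_fst_le Δ.2) (norm_snd_le Δ)) hΔ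
  have hΔ3 : |Δ.2.2| ≤ M * ((1+M)*s + l) := le_trans (le_trans (norm_snd_le Δ.2) (norm_snd_le Δ)) hΔ
  have hN1 : |(D (0,0,0)).1| ≤ N := le_trans (norm_fst_le (D (0,0,0))) hND
  have hN3 : |(D (0,0,0)).2.2| ≤ N := le_trans (le_trans (norm_snd_le (D (0,0,0)).2) (norm_snd_le (D (0,0,0)))) hND
  have hexp : dotP (D pt) (-p1 Φ q, 1, -p2 Φ q) - (D (0,0,0)).2.1
      = Δ.1 * (-p1 Φ q) + Δ.2.1 + Δ.2.2 * (-p2 Φ q)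
        + (D (0,0,0)).1 * (-p1 Φ q) + (D (0,0,0)).2.2 * (-p2 Φ q) := by
    simp only [dotP, hΔdef, Prod.fst_sub, Prod.snd_sub]
    ring
  rw [hexp]
  set A := M * ((1+M)*s + l) with hAdef
  have hA0 : 0 ≤ A := (abs_nonneg Δ.1).trans hΔ1
  have hMs : (0:ℝ) ≤ M * s := by positivity
  have habs : ∀ u B v P : ℝ, |u| ≤ B → |v| ≤ P → |u * v| ≤ B * P := by
    intro u B v P hu hv
    rw [abs_mul]
    exact mul_le_mul hu hv (abs_nonneg _) ((abs_nonneg u).trans hu)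
  have b1 : |Δ.1 * (-p1 Φ q)| ≤ A * (M*s) := habs _ _ _ _ hΔ1 (by rwa [abs_neg])
  have b3 : |Δ.2.2 * (-p2 Φ q)| ≤ A * (M*s) := habs _ _ _ _ hΔ3 (by rwa [abs_neg])
  have b4 : |(D (0,0,0)).1 * (-p1 Φ q)| ≤ N * (M*s) := habs _ _ _ _ hN1 (by rwa [abs_neg])
  have b5 : |(D (0,0,0)).2.2 * (-p2 Φ q)| ≤ N * (M*s) := habs _ _ _ _ hN3 (by rwa [abs_neg])
  have hsum : |Δ.1 * (-p1 Φ q) + Δ.2.1 + Δ.2.2 * (-p2 Φ q)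
        + (D (0,0,0)).1 * (-p1 Φ q) + (D (0,0,0)).2.2 * (-p2 Φ q)|
      ≤ A * (M*s) + A + A * (M*s) + N * (M*s) + N * (M*s) := by
    calc _ ≤ |Δ.1 * (-p1 Φ q) + Δ.2.1 + Δ.2.2 * (-p2 Φ q) + (D (0,0,0)).1 * (-p1 Φ q)|
            + |(D (0,0,0)).2.2 * (-p2 Φ q)| := abs_add_le _ _
      _ ≤ (|Δ.1 * (-p1 Φ q) + Δ.2.1 + Δ.2.2 * (-p2 Φ q)| + |(D (0,0,0)).1 * (-p1 Φ q)|)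
            + |(D (0,0,0)).2.2 * (-p2 Φ q)| := by gcongr; exact abs_add_le _ _
      _ ≤ ((|Δ.1 * (-p1 Φ q) + Δ.2.1| + |Δ.2.2 * (-p2 Φ q)|) + |(D (0,0,0)).1 * (-p1 Φ q)|)
            + |(D (0,0,0)).2.2 * (-p2 Φ q)| := by gcongr; exact abs_add_le _ _
      _ ≤ (((|Δ.1 * (-p1 Φ q)| + |Δ.2.1|) + |Δ.2.2 * (-p2 Φ q)|) + |(D (0,0,0)).1 * (-p1 Φ q)|)
            + |(D (0,0,0)).2.2 * (-p2 Φ q)| := by gcongr; exact abs_add_le _ _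
      _ ≤ A * (M*s) + A + A * (M*s) + N * (M*s) + N * (M*s) :=
        add_le_add (add_le_add (add_le_add (add_le_add b1 hΔ2) b3) b4) b5
  refine hsum.trans ?_
  rw [hAdef]
  exact arith_est M r₀ N s l hM hN hs hl hsr
end aux2

section aux3
variable (M r₀ N : ℝ) (Φ : ℝ × ℝ → ℝ)

lemma cont_integrand (hΦ : ContDiff ℝ 2 Φ) (D : ℝ × ℝ × ℝ → ℝ × ℝ × ℝ)
    (hD : ContDiff ℝ 1 D) (ε : ℝ) :
    Continuous (fun x : ℝ × ℝ => x.2 * dotP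
      (D (x.2*cos x.1, Φ (x.2*cos x.1, x.2*sin x.1) + ε, x.2*sin x.1))
      (-p1 Φ (x.2*cos x.1, x.2*sin x.1), 1, -p2 Φ (x.2*cos x.1, x.2*sin x.1))) := by
  have hfd : Continuous (fderiv ℝ Φ) := (hΦ.fderiv_right (m := 1) (by norm_num)).continuous
  have hΦc : Continuous Φ := hΦ.continuous
  have hDc : Continuous D := hD.continuous
  unfold dotP p1 p2
  fun_prop

lemma flux_face_est (hM : 0 < M) (hN : 0 ≤ N)
    (hΦ : ContDiff ℝ 2 Φ) (hΦ0 : Φ (0,0) = 0)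
    (hΦ1 : p1 Φ (0,0) = 0) (hΦ2 : p2 Φ (0,0) = 0)
    (hΦb : ∀ q, ‖fderiv ℝ Φ q‖ ≤ M ∧ ‖fderiv ℝ (fderiv ℝ Φ) q‖ ≤ M)
    (D : ℝ × ℝ × ℝ → ℝ × ℝ × ℝ) (hD : ContDiff ℝ 1 D)
    (hDb : ∀ p, ‖fderiv ℝ D p‖ ≤ M) (hND : ‖D (0,0,0)‖ ≤ N)
    (r l ε : ℝ) (hr : 0 < r) (hrr : r ≤ r₀) (hε : |ε| ≤ l) :
    |(∫ α in (0:ℝ)..(2*π), ∫ s in (0:ℝ)..r,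
        s * dotP (D (s*cos α, Φ (s*cos α, s*sin α) + ε, s*sin α))
          (-p1 Φ (s*cos α, s*sin α), 1, -p2 Φ (s*cos α, s*sin α)))
      - π * r^2 * (D (0,0,0)).2.1|
      ≤ 2*π*((M*(1+M)*(1+2*M*r₀) + 2*M*N) * r^2 * (r+l)) := by
  have hl : 0 ≤ l := (abs_nonneg ε).trans hε
  set K := M*(1+M)*(1+2*M*r₀) + 2*M*N with hKdef
  have hr0' : 0 < r₀ := hr.trans_le hrr
  have hK0 : 0 ≤ K := by
    have h1 : (0:ℝ) < M*(1+M)*(1+2*M*r₀) := by positivity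
    nlinarith [mul_nonneg hM.le hN]
  set c := (D (0,0,0)).2.1 with hcdef
  set f : ℝ → ℝ → ℝ := fun α s => s * dotP
      (D (s*cos α, Φ (s*cos α, s*sin α) + ε, s*sin α))
      (-p1 Φ (s*cos α, s*sin α), 1, -p2 Φ (s*cos α, s*sin α)) with hfdef
  have hcont : Continuous (Function.uncurry f) :=
    cont_integrand Φ hΦ D hD ε
  have hFcont : Continuous (fun α => ∫ s in (0:ℝ)..r, f α s) :=
    continuous_parametric_intervalIntegral_of_continuous' hcont 0 r
  have hinner : ∀ α, |(∫ s in (0:ℝ)..r, f α s) - r^2/2 * c| ≤ K*r^2*(r+l) := by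
    intro α
    have hfs : Continuous (fun s => f α s) := hcont.comp (Continuous.prodMk_right α)
    have hI1 : IntervalIntegrable (fun s => f α s) MeasureTheory.volume 0 r :=
      hfs.intervalIntegrable _ _
    have hI2 : IntervalIntegrable (fun s : ℝ => s * c) MeasureTheory.volume 0 r :=
      (continuous_id.mul continuous_const).intervalIntegrable _ _
    have hconst : (∫ s in (0:ℝ)..r, s * c) = r^2/2 * c := by
      rw [intervalIntegral.integral_mul_const, integral_id]; ring
    rw [← hconst, ← intervalIntegral.integral_sub hI1 hI2]
    have hbound : ∀ s ∈ Set.uIoc (0:ℝ) r, ‖f α s - s*c‖ ≤ K*r*(r+l) := by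
      intro s hs'
      rw [Set.uIoc_of_le hr.le] at hs'
      obtain ⟨hs0, hsr'⟩ := hs'
      have hkey := key_est M r₀ N Φ hM hN hΦ hΦ0 hΦ1 hΦ2 hΦb D hD hDb hND
        s l ε α hs0.le (hsr'.trans hrr) hε
      have heq : f α s - s*c = s * (dotP
          (D (s*cos α, Φ (s*cos α, s*sin α) + ε, s*sin α))
          (-p1 Φ (s*cos α, s*sin α), 1, -p2 Φ (s*cos α, s*sin α)) - c) := by
        simp only [hfdef]; ring
      rw [heq, Real.norm_eq_abs, abs_mul, abs_of_nonneg hs0.le]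
      rw [← hKdef] at hkey
      have h1 : |dotP (D (s*cos α, Φ (s*cos α, s*sin α) + ε, s*sin α))
          (-p1 Φ (s*cos α, s*sin α), 1, -p2 Φ (s*cos α, s*sin α)) - c| ≤ K*(r+l) :=
        hkey.trans (mul_le_mul_of_nonneg_left (add_le_add_left hsr' l) hK0)
      refine le_trans (mul_le_mul hsr' h1 (abs_nonneg _) hr.le) (le_of_eq (by ring))
    calc |∫ s in (0:ℝ)..r, (f α s - s*c)| ≤ K*r*(r+l) * |r - 0| :=
          intervalIntegral.norm_integral_le_of_norm_le_const hbound
      _ = K*r^2*(r+l) := by rw [sub_zero, abs_of_nonneg hr.le]; ring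
  have hIc : IntervalIntegrable (fun α => ∫ s in (0:ℝ)..r, f α s)
      MeasureTheory.volume 0 (2*π) := hFcont.intervalIntegrable _ _
  have hIc2 : IntervalIntegrable (fun _ : ℝ => r^2/2*c) MeasureTheory.volume 0 (2*π) :=
    intervalIntegrable_const
  have h2π : (∫ _ in (0:ℝ)..(2*π), r^2/2*c) = π*r^2*c := by
    rw [intervalIntegral.integral_const, smul_eq_mul]; ring
  have hg : (∫ α in (0:ℝ)..(2*π), ∫ s in (0:ℝ)..r, f α s) - π*r^2*c
      = ∫ α in (0:ℝ)..(2*π), ((∫ s in (0:ℝ)..r, f α s) - r^2/2*c) := by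
    rw [intervalIntegral.integral_sub hIc hIc2, h2π]
  show |(∫ α in (0:ℝ)..(2*π), ∫ s in (0:ℝ)..r, f α s) - π*r^2*c|
      ≤ 2*π*(K * r^2 * (r+l))
  rw [hg]
  calc |∫ α in (0:ℝ)..(2*π), ((∫ s in (0:ℝ)..r, f α s) - r^2/2*c)|
      ≤ K*r^2*(r+l) * |2*π - 0| :=
        intervalIntegral.norm_integral_le_of_norm_le_const
          (f := fun α => (∫ s in (0:ℝ)..r, f α s) - r^2/2*c) (fun α _ => hinner α)
    _ = 2*π*(K * r^2 * (r+l)) := by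
        rw [sub_zero, abs_of_nonneg (by positivity)]; ring
end aux3

section aux4
variable (M r₀ l₀ N : ℝ) (Φ : ℝ × ℝ → ℝ)

lemma dot_lat_bound (a : ℝ × ℝ × ℝ) (α C : ℝ) (ha : ‖a‖ ≤ C) :
    |dotP a (cos α, 0, sin α)| ≤ 2*C := by
  have hC : 0 ≤ C := (norm_nonneg a).trans ha
  have ha1 : |a.1| ≤ C := le_trans (norm_fst_le a) ha
  have ha3 : |a.2.2| ≤ C := le_trans (le_trans (norm_snd_le a.2) (norm_snd_le a)) ha
  have hthis : dotP a (cos α, 0, sin α) = a.1 * cos α + a.2.2 * sin α := by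
    simp [dotP]
  rw [hthis]
  have e1 : |a.1 * cos α| ≤ C := by
    rw [abs_mul]
    nlinarith [abs_cos_le_one α, abs_nonneg a.1, abs_nonneg (cos α)]
  have e3 : |a.2.2 * sin α| ≤ C := by
    rw [abs_mul]
    nlinarith [abs_sin_le_one α, abs_nonneg a.2.2, abs_nonneg (sin α)]
  calc |a.1 * cos α + a.2.2 * sin α| ≤ |a.1 * cos α| + |a.2.2 * sin α| := abs_add_le _ _
    _ ≤ 2*C := by linarith

lemma lateral_est (hM : 0 < M) (hN : 0 ≤ N) (hr₀ : 0 < r₀) (hl₀ : 0 < l₀)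
    (hΦ : ContDiff ℝ 2 Φ) (hΦ0 : Φ (0,0) = 0)
    (hΦb : ∀ q, ‖fderiv ℝ Φ q‖ ≤ M)
    (Dplus Dminus : ℝ × ℝ × ℝ → ℝ × ℝ × ℝ)
    (hDp : ContDiff ℝ 1 Dplus) (hDm : ContDiff ℝ 1 Dminus)
    (hDpb : ∀ p, ‖fderiv ℝ Dplus p‖ ≤ M) (hDmb : ∀ p, ‖fderiv ℝ Dminus p‖ ≤ M)
    (hNDp : ‖Dplus (0,0,0)‖ ≤ N) (hNDm : ‖Dminus (0,0,0)‖ ≤ N)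
    (r l : ℝ) (hr : 0 < r) (hrr : r ≤ r₀) (hl : 0 ≤ l) (hll : l ≤ l₀) :
    |∫ h in (-l)..l, ∫ α in (0:ℝ)..(2*π),
        r * dotP (Dfield Φ Dplus Dminus (r*cos α, Φ (r*cos α, r*sin α) + h, r*sin α))
          (cos α, 0, sin α)|
      ≤ 2*π*r*(2*(N + M*((1+M)*r₀ + l₀)))*(2*l) := by
  set B := 2*(N + M*((1+M)*r₀ + l₀)) with hBdef
  have hB0 : 0 ≤ B := by positivity
  have hinner : ∀ h : ℝ, |h| ≤ l → |∫ α in (0:ℝ)..(2*π),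
      r * dotP (Dfield Φ Dplus Dminus (r*cos α, Φ (r*cos α, r*sin α) + h, r*sin α))
        (cos α, 0, sin α)| ≤ r * B * (2*π) := by
    intro h hh
    have hb : ∀ α ∈ Set.uIoc (0:ℝ) (2*π),
        ‖r * dotP (Dfield Φ Dplus Dminus (r*cos α, Φ (r*cos α, r*sin α) + h, r*sin α))
          (cos α, 0, sin α)‖ ≤ r * B := by
      intro α _
      set pt : ℝ × ℝ × ℝ := (r*cos α, Φ (r*cos α, r*sin α) + h, r*sin α) with hptdef
      have hΦq : |Φ (r*cos α, r*sin α)| ≤ M * r := by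
        have := Phi_bound M Φ hM hΦ hΦ0 hΦb (r*cos α, r*sin α)
        have hq : ‖((r*cos α, r*sin α) : ℝ × ℝ)‖ ≤ r := by
          rw [Prod.norm_def]
          apply max_le <;> rw [Real.norm_eq_abs, abs_mul, abs_of_nonneg hr.le]
          · nlinarith [abs_cos_le_one α, abs_nonneg (cos α)]
          · nlinarith [abs_sin_le_one α, abs_nonneg (sin α)]
        nlinarith
      have hpt : ‖pt‖ ≤ (1+M)*r₀ + l₀ := by
        rw [Prod.norm_def, Prod.norm_def]
        have h1 : ‖pt.1‖ ≤ r := by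
          rw [Real.norm_eq_abs]; show |r*cos α| ≤ r
          rw [abs_mul, abs_of_nonneg hr.le]
          nlinarith [abs_cos_le_one α, abs_nonneg (cos α)]
        have h3 : ‖pt.2.2‖ ≤ r := by
          rw [Real.norm_eq_abs]; show |r*sin α| ≤ r
          rw [abs_mul, abs_of_nonneg hr.le]
          nlinarith [abs_sin_le_one α, abs_nonneg (sin α)]
        have h2 : ‖pt.2.1‖ ≤ M*r + l := by
          rw [Real.norm_eq_abs]; show |Φ (r*cos α, r*sin α) + h| ≤ M*r + l
          calc |Φ (r*cos α, r*sin α) + h| ≤ |Φ (r*cos α, r*sin α)| + |h| := abs_add_le _ _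
            _ ≤ M*r + l := add_le_add hΦq hh
        apply max_le (by nlinarith) (max_le (by nlinarith) (by nlinarith))
      have ha : ‖Dfield Φ Dplus Dminus pt‖ ≤ N + M*((1+M)*r₀ + l₀) := by
        unfold Dfield
        split_ifs
        · have := lip_of_fderiv (hDp.differentiable one_ne_zero) hDpb (0,0,0) pt
          have h0 : ((0,0,0) : ℝ × ℝ × ℝ) = 0 := rfl
          rw [h0, sub_zero] at this
          calc ‖Dplus pt‖ = ‖Dplus (0,0,0) + (Dplus pt - Dplus (0,0,0))‖ := by congr 1; abel
            _ ≤ ‖Dplus (0,0,0)‖ + ‖Dplus pt - Dplus (0,0,0)‖ := norm_add_le _ _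
            _ ≤ N + M*((1+M)*r₀ + l₀) := by
                apply add_le_add hNDp
                calc ‖Dplus pt - Dplus (0,0,0)‖ ≤ M * ‖pt‖ := by rw [h0]; exact this
                  _ ≤ M*((1+M)*r₀ + l₀) := by nlinarith [norm_nonneg pt]
        · have := lip_of_fderiv (hDm.differentiable one_ne_zero) hDmb (0,0,0) pt
          have h0 : ((0,0,0) : ℝ × ℝ × ℝ) = 0 := rfl
          rw [h0, sub_zero] at this
          calc ‖Dminus pt‖ = ‖Dminus (0,0,0) + (Dminus pt - Dminus (0,0,0))‖ := by congr 1; abel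
            _ ≤ ‖Dminus (0,0,0)‖ + ‖Dminus pt - Dminus (0,0,0)‖ := norm_add_le _ _
            _ ≤ N + M*((1+M)*r₀ + l₀) := by
                apply add_le_add hNDm
                calc ‖Dminus pt - Dminus (0,0,0)‖ ≤ M * ‖pt‖ := by rw [h0]; exact this
                  _ ≤ M*((1+M)*r₀ + l₀) := by nlinarith [norm_nonneg pt]
      rw [Real.norm_eq_abs, abs_mul, abs_of_nonneg hr.le]
      have hd : |dotP (Dfield Φ Dplus Dminus pt) (cos α, 0, sin α)| ≤ B :=
        hBdef ▸ dot_lat_bound _ α _ ha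
      exact mul_le_mul_of_nonneg_left hd hr.le
    calc |∫ α in (0:ℝ)..(2*π),
        r * dotP (Dfield Φ Dplus Dminus (r*cos α, Φ (r*cos α, r*sin α) + h, r*sin α))
          (cos α, 0, sin α)| ≤ r * B * |2*π - 0| :=
          intervalIntegral.norm_integral_le_of_norm_le_const hb
      _ = r * B * (2*π) := by rw [sub_zero, abs_of_nonneg (by positivity)]
  have houter : ∀ h ∈ Set.uIoc (-l) l, ‖∫ α in (0:ℝ)..(2*π),
      r * dotP (Dfield Φ Dplus Dminus (r*cos α, Φ (r*cos α, r*sin α) + h, r*sin α))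
        (cos α, 0, sin α)‖ ≤ r * B * (2*π) := by
    intro h hh
    rw [Set.uIoc_of_le (by linarith)] at hh
    exact hinner h (abs_le.mpr ⟨hh.1.le, hh.2⟩)
  calc |∫ h in (-l)..l, ∫ α in (0:ℝ)..(2*π),
      r * dotP (Dfield Φ Dplus Dminus (r*cos α, Φ (r*cos α, r*sin α) + h, r*sin α))
        (cos α, 0, sin α)| ≤ r * B * (2*π) * |l - (-l)| :=
        intervalIntegral.norm_integral_le_of_norm_le_const houter
    _ = 2*π*r*B*(2*l) := by
        rw [abs_of_nonneg (by linarith : (0:ℝ) ≤ l - (-l))]; ring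
end aux4

/-- Jump condition for the normal component of D: if the divergence identity
∫_{∂C} D·n dA = ∫_C ρ_c dx holds for all small curved cylinders C and the
surface charge density ω = lim_{r→0} lim_{Δl→0} (1/(πr²))∫_C ρ_c dx exists,
then (D⁺(0) − D⁻(0))·n = ω with n = (0,1,0). -/
theorem stmt_6 (r₀ l₀ M C : ℝ) (hr₀ : 0 < r₀) (hl₀ : 0 < l₀) (hM : 0 < M) (hC : 0 < C)
    (Φ : ℝ × ℝ → ℝ) (hΦ : ContDiff ℝ 2 Φ)
    (hΦ0 : Φ (0, 0) = 0) (hΦ1 : p1 Φ (0, 0) = 0) (hΦ2 : p2 Φ (0, 0) = 0)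
    (hΦb : ∀ q, ‖fderiv ℝ Φ q‖ ≤ M ∧ ‖fderiv ℝ (fderiv ℝ Φ) q‖ ≤ M)
    (Dplus Dminus : ℝ × ℝ × ℝ → ℝ × ℝ × ℝ)
    (hDp : ContDiff ℝ 1 Dplus) (hDm : ContDiff ℝ 1 Dminus)
    (hDpb : ∀ p, ‖fderiv ℝ Dplus p‖ ≤ M) (hDmb : ∀ p, ‖fderiv ℝ Dminus p‖ ≤ M)
    (W : ℝ → ℝ → ℝ)
    (hWb : ∀ r ∈ Ioo (0:ℝ) r₀, ∀ l ∈ Ioo (0:ℝ) l₀, |W r l| ≤ C * r ^ 2 * l)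
    (hdiv : ∀ r ∈ Ioo (0:ℝ) r₀, ∀ l ∈ Ioo (0:ℝ) l₀,
      totalFlux Φ Dplus Dminus r l = W r l)
    (ω : ℝ) (g : ℝ → ℝ)
    (hW1 : ∀ r ∈ Ioo (0:ℝ) r₀,
      Tendsto (fun l => W r l / (π * r ^ 2)) (𝓝[>] 0) (𝓝 (g r)))
    (hW2 : Tendsto g (𝓝[>] 0) (𝓝 ω)) :
    (Dplus (0, 0, 0)).2.1 - (Dminus (0, 0, 0)).2.1 = ω := by
  set c := (Dplus (0, 0, 0)).2.1 - (Dminus (0, 0, 0)).2.1 with hcdef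
  set N := ‖Dplus (0,0,0)‖ + ‖Dminus (0,0,0)‖ with hNdef
  have hN : 0 ≤ N := by positivity
  have hNDp : ‖Dplus (0,0,0)‖ ≤ N := le_add_of_nonneg_right (norm_nonneg _)
  have hNDm : ‖Dminus (0,0,0)‖ ≤ N := le_add_of_nonneg_left (norm_nonneg _)
  set K := M*(1+M)*(1+2*M*r₀) + 2*M*N with hKdef
  set B := 2*(N + M*((1+M)*r₀ + l₀)) with hBdef
  -- main quantitative estimate
  have key : ∀ r ∈ Ioo (0:ℝ) r₀, ∀ l ∈ Ioo (0:ℝ) l₀,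
      |W r l - π*r^2*c| ≤ 4*π*(K*r^2*(r+l)) + 2*π*r*B*(2*l) := by
    intro r hr l hl
    rw [← hdiv r hr l hl]
    have hll : |l| ≤ l := by rw [abs_of_pos hl.1]
    have hml : |(-l)| ≤ l := by rw [abs_neg, abs_of_pos hl.1]
    have hTeq : (∫ α in (0:ℝ)..(2*π), ∫ s in (0:ℝ)..r,
        s * dotP (Dfield Φ Dplus Dminus
            (s * cos α, Φ (s * cos α, s * sin α) + l, s * sin α))
          (-p1 Φ (s * cos α, s * sin α), 1, -p2 Φ (s * cos α, s * sin α)))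
        = (∫ α in (0:ℝ)..(2*π), ∫ s in (0:ℝ)..r,
        s * dotP (Dplus (s * cos α, Φ (s * cos α, s * sin α) + l, s * sin α))
          (-p1 Φ (s * cos α, s * sin α), 1, -p2 Φ (s * cos α, s * sin α))) := by
      apply intervalIntegral.integral_congr; intro α _
      apply intervalIntegral.integral_congr; intro s _
      simp only [Dfield]
      rw [if_pos (by linarith [hl.1] :
        Φ (s * cos α, s * sin α) ≤ Φ (s * cos α, s * sin α) + l)]
    have hBeq : (∫ α in (0:ℝ)..(2*π), ∫ s in (0:ℝ)..r,
        s * dotP (Dfield Φ Dplus Dminus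
            (s * cos α, Φ (s * cos α, s * sin α) - l, s * sin α))
          (p1 Φ (s * cos α, s * sin α), -1, p2 Φ (s * cos α, s * sin α)))
        = -(∫ α in (0:ℝ)..(2*π), ∫ s in (0:ℝ)..r,
        s * dotP (Dminus (s * cos α, Φ (s * cos α, s * sin α) + (-l), s * sin α))
          (-p1 Φ (s * cos α, s * sin α), 1, -p2 Φ (s * cos α, s * sin α))) := by
      have h1 : (∫ α in (0:ℝ)..(2*π), ∫ s in (0:ℝ)..r,
          s * dotP (Dfield Φ Dplus Dminus
              (s * cos α, Φ (s * cos α, s * sin α) - l, s * sin α))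
            (p1 Φ (s * cos α, s * sin α), -1, p2 Φ (s * cos α, s * sin α)))
          = (∫ α in (0:ℝ)..(2*π), ∫ s in (0:ℝ)..r,
          -(s * dotP (Dminus (s * cos α, Φ (s * cos α, s * sin α) + (-l), s * sin α))
            (-p1 Φ (s * cos α, s * sin α), 1, -p2 Φ (s * cos α, s * sin α)))) := by
        apply intervalIntegral.integral_congr; intro α _
        apply intervalIntegral.integral_congr; intro s _
        simp only [Dfield]
        rw [if_neg (by push_neg; linarith [hl.1] :
          ¬ Φ (s * cos α, s * sin α) ≤ Φ (s * cos α, s * sin α) - l)]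
        have hpts : Φ (s * cos α, s * sin α) - l = Φ (s * cos α, s * sin α) + (-l) := by ring
        rw [hpts]
        simp only [dotP]; ring
      rw [h1]
      simp only [intervalIntegral.integral_neg]
    have e1 := flux_face_est M r₀ N Φ hM hN hΦ hΦ0 hΦ1 hΦ2 hΦb Dplus hDp hDpb hNDp
      r l l hr.1 hr.2.le hll
    have e2 := flux_face_est M r₀ N Φ hM hN hΦ hΦ0 hΦ1 hΦ2 hΦb Dminus hDm hDmb hNDm
      r l (-l) hr.1 hr.2.le hml
    have e3 := lateral_est M r₀ l₀ N Φ hM hN hr₀ hl₀ hΦ hΦ0 (fun q => (hΦb q).1)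
      Dplus Dminus hDp hDm hDpb hDmb hNDp hNDm r l hr.1 hr.2.le hl.1.le hl.2.le
    rw [← hKdef] at e1 e2
    rw [← hBdef] at e3
    simp only [totalFlux]
    rw [hTeq, hBeq]
    set T' := (∫ α in (0:ℝ)..(2*π), ∫ s in (0:ℝ)..r,
        s * dotP (Dplus (s * cos α, Φ (s * cos α, s * sin α) + l, s * sin α))
          (-p1 Φ (s * cos α, s * sin α), 1, -p2 Φ (s * cos α, s * sin α))) with hT'
    set B' := (∫ α in (0:ℝ)..(2*π), ∫ s in (0:ℝ)..r,
        s * dotP (Dminus (s * cos α, Φ (s * cos α, s * sin α) + (-l), s * sin α))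
          (-p1 Φ (s * cos α, s * sin α), 1, -p2 Φ (s * cos α, s * sin α))) with hB'
    set L := (∫ h in (-l)..l, ∫ α in (0:ℝ)..(2*π),
        r * dotP (Dfield Φ Dplus Dminus
            (r * cos α, Φ (r * cos α, r * sin α) + h, r * sin α))
          (cos α, 0, sin α)) with hL
    have hsplit : T' + -B' + L - π*r^2*c
        = (T' - π*r^2*(Dplus (0,0,0)).2.1) - (B' - π*r^2*(Dminus (0,0,0)).2.1) + L := by
      rw [hcdef]; ring
    rw [hsplit]
    calc |(T' - π*r^2*(Dplus (0,0,0)).2.1) - (B' - π*r^2*(Dminus (0,0,0)).2.1) + L|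
        ≤ |(T' - π*r^2*(Dplus (0,0,0)).2.1) - (B' - π*r^2*(Dminus (0,0,0)).2.1)| + |L| :=
          abs_add_le _ _
      _ ≤ (|T' - π*r^2*(Dplus (0,0,0)).2.1| + |B' - π*r^2*(Dminus (0,0,0)).2.1|) + |L| := by
          gcongr; exact abs_sub _ _
      _ ≤ (2*π*(K*r^2*(r+l)) + 2*π*(K*r^2*(r+l))) + 2*π*r*B*(2*l) := by
          gcongr
      _ = 4*π*(K*r^2*(r+l)) + 2*π*r*B*(2*l) := by ring
  -- divide through by π r²
  have key2 : ∀ r ∈ Ioo (0:ℝ) r₀, ∀ l ∈ Ioo (0:ℝ) l₀,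
      |W r l / (π*r^2) - c| ≤ 4*K*(r+l) + 4*B*l/r := by
    intro r hr l hl
    have hπr2 : 0 < π*r^2 := mul_pos pi_pos (pow_pos hr.1 2)
    have hrne : r ≠ 0 := ne_of_gt hr.1
    have heq : W r l/(π*r^2) - c = (W r l - π*r^2*c)/(π*r^2) := by
      field_simp
    rw [heq, abs_div, abs_of_pos hπr2, div_le_iff₀ hπr2]
    calc |W r l - π*r^2*c| ≤ 4*π*(K*r^2*(r+l)) + 2*π*r*B*(2*l) := key r hr l hl
      _ = (4*K*(r+l) + 4*B*l/r) * (π*r^2) := by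
          field_simp
          ring
  -- first limit: l → 0⁺
  have hgr : ∀ r ∈ Ioo (0:ℝ) r₀, |g r - c| ≤ 4*K*r := by
    intro r hr
    have hWt : Tendsto (fun l => |W r l/(π*r^2) - c|) (𝓝[>] 0) (𝓝 |g r - c|) :=
      ((hW1 r hr).sub_const c).abs
    have htb : Tendsto (fun l => 4*K*(r+l) + 4*B*l/r) (𝓝[>] 0) (𝓝 (4*K*r)) := by
      have hc : Continuous (fun l : ℝ => 4*K*(r+l) + 4*B*l/r) :=
        (continuous_const.mul (continuous_const.add continuous_id)).add
          ((continuous_const.mul continuous_id).div_const r)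
      have h0 : 4*K*(r+0) + 4*B*0/r = 4*K*r := by ring
      exact (h0 ▸ hc.tendsto 0).mono_left nhdsWithin_le_nhds
    have hev : (fun l => |W r l/(π*r^2) - c|) ≤ᶠ[𝓝[>] (0:ℝ)]
        (fun l => 4*K*(r+l) + 4*B*l/r) := by
      filter_upwards [Ioo_mem_nhdsGT_of_mem (by constructor <;> [exact le_refl 0; exact hl₀])]
        with l hl
      exact key2 r hr l hl
    exact le_of_tendsto_of_tendsto hWt htb hev
  -- second limit: r → 0⁺
  have h1 : Tendsto (fun r => |g r - c|) (𝓝[>] 0) (𝓝 |ω - c|) := (hW2.sub_const c).abs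
  have h2 : Tendsto (fun r : ℝ => 4*K*r) (𝓝[>] 0) (𝓝 0) := by
    have hc : Continuous (fun r : ℝ => 4*K*r) := continuous_const.mul continuous_id
    have h0 : 4*K*0 = 0 := by ring
    exact (h0 ▸ hc.tendsto 0).mono_left nhdsWithin_le_nhds
  have hev2 : (fun r => |g r - c|) ≤ᶠ[𝓝[>] (0:ℝ)] (fun r => 4*K*r) := by
    filter_upwards [Ioo_mem_nhdsGT_of_mem (by constructor <;> [exact le_refl 0; exact hr₀])]
      with r hr
    exact hgr r hr
  have hfin : |ω - c| ≤ 0 := le_of_tendsto_of_tendsto h1 h2 hev2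
  have : ω - c = 0 := abs_eq_zero.mp (le_antisymm hfin (abs_nonneg _))
  linarith
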